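/- Let (X,d) be a compact metric space and let (X, f_{1,∞}) be a non-autonomous discrete system such that f_{1,∞} is feeble open, each f_n is surjective, (f_n) converges uniformly to a continuous map f : X → X, and the compositions (f_r^k) converge collectively to (f^k). Then f_{1,∞} is syndetically transitive if and only if f is syndetically transitive. -/

import Mathlib

open Set Filter

/-- `nds f i n` is the `n`-step composition `f_i^n = f (i+n-1) ∘ ⋯ ∘ f i`, with `nds f i 0 = id`. -/
def nds {X : Type*} (f : ℕ → X → X) (i : ℕ) : ℕ → X → X
  | 0 => id
  | n + 1 => f (i + n) ∘ nds f i n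

section TopDefs

variable {X : Type*} [TopologicalSpace X]

/-- The NDS `f_{1,∞}` is (topologically) transitive. -/
def NDSTransitive (f : ℕ → X → X) : Prop :=
  ∀ U V : Set X, IsOpen U → U.Nonempty → IsOpen V → V.Nonempty →
    ∃ n : ℕ, 0 < n ∧ (nds f 1 n '' U ∩ V).Nonempty

/-- The NDS `f_{1,∞}` is mixing. -/
def NDSMixing (f : ℕ → X → X) : Prop :=
  ∀ U V : Set X, IsOpen U → U.Nonempty → IsOpen V → V.Nonempty →
    ∃ N : ℕ, ∀ n : ℕ, N ≤ n → (nds f 1 n '' U ∩ V).Nonempty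

/-- The NDS `f_{1,∞}` is weakly mixing. -/
def NDSWeaklyMixing (f : ℕ → X → X) : Prop :=
  ∀ U₁ U₂ V₁ V₂ : Set X, IsOpen U₁ → U₁.Nonempty → IsOpen U₂ → U₂.Nonempty →
    IsOpen V₁ → V₁.Nonempty → IsOpen V₂ → V₂.Nonempty →
    ∃ n : ℕ, 0 < n ∧ (nds f 1 n '' U₁ ∩ V₁).Nonempty ∧ (nds f 1 n '' U₂ ∩ V₂).Nonempty

/-- The NDS `f_{1,∞}` is multi-transitive. -/
def NDSMultiTransitive (f : ℕ → X → X) : Prop :=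
  ∀ m : ℕ, 0 < m → ∀ U V : Fin m → Set X,
    (∀ j, IsOpen (U j)) → (∀ j, (U j).Nonempty) →
    (∀ j, IsOpen (V j)) → (∀ j, (V j).Nonempty) →
    ∃ l : ℕ, 0 < l ∧ ∀ j : Fin m, (nds f 1 (l * (j.1 + 1)) '' U j ∩ V j).Nonempty

/-- The NDS `f_{1,∞}` is totally transitive. -/
def NDSTotallyTransitive (f : ℕ → X → X) : Prop :=
  ∀ k : ℕ, 0 < k → ∀ U V : Set X, IsOpen U → U.Nonempty → IsOpen V → V.Nonempty →
    ∃ n : ℕ, 0 < n ∧ (nds f 1 (n * k) '' U ∩ V).Nonempty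

/-- The NDS `f_{1,∞}` is minimal: every orbit is dense. -/
def NDSMinimal (f : ℕ → X → X) : Prop :=
  ∀ x : X, Dense (Set.range fun n : ℕ => nds f 1 n x)

/-- The NDS `f_{1,∞}` is feeble open. -/
def FeebleOpen (f : ℕ → X → X) : Prop :=
  ∀ i : ℕ, 1 ≤ i → ∀ U : Set X, IsOpen U → U.Nonempty → (interior (f i '' U)).Nonempty

/-- A set of positive integers is syndetic (has bounded gaps). -/
def SyndeticSet (A : Set ℕ) : Prop :=
  ∃ M : ℕ, ∀ i : ℕ, 1 ≤ i → ∃ j ∈ A, i ≤ j ∧ j ≤ i + M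

/-- A set of positive integers is thick (contains arbitrarily long runs). -/
def ThickSet (A : Set ℕ) : Prop :=
  ∀ p : ℕ, ∃ n : ℕ, ∀ j : ℕ, n ≤ j → j ≤ n + p → j ∈ A

/-- The NDS `f_{1,∞}` is syndetically transitive. -/
def NDSSyndeticallyTransitive (f : ℕ → X → X) : Prop :=
  ∀ U V : Set X, IsOpen U → U.Nonempty → IsOpen V → V.Nonempty →
    SyndeticSet {n : ℕ | 0 < n ∧ (nds f 1 n '' U ∩ V).Nonempty}

/-- The NDS `f_{1,∞}` has dense periodic points. -/
def NDSDensePeriodicPoints (f : ℕ → X → X) : Prop :=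
  Dense {x : X | ∃ k : ℕ, 0 < k ∧ ∀ n : ℕ, 0 < n → nds f 1 (k * n) x = x}

/-- The NDS `f_{k,∞}` is strongly transitive. -/
def NDSStronglyTransitiveFrom (f : ℕ → X → X) (k : ℕ) : Prop :=
  ∀ U : Set X, IsOpen U → U.Nonempty →
    ∃ M : ℕ, 0 < M ∧ (⋃ i ∈ Set.Icc 1 M, nds f k i '' U) = Set.univ

/-- An autonomous map is transitive. -/
def MapTransitive {Y : Type*} [TopologicalSpace Y] (g : Y → Y) : Prop :=
  ∀ U V : Set Y, IsOpen U → U.Nonempty → IsOpen V → V.Nonempty →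
    ∃ n : ℕ, 0 < n ∧ (g^[n] '' U ∩ V).Nonempty

/-- An autonomous map is weakly mixing. -/
def MapWeaklyMixing {Y : Type*} [TopologicalSpace Y] (g : Y → Y) : Prop :=
  ∀ U₁ U₂ V₁ V₂ : Set Y, IsOpen U₁ → U₁.Nonempty → IsOpen U₂ → U₂.Nonempty →
    IsOpen V₁ → V₁.Nonempty → IsOpen V₂ → V₂.Nonempty →
    ∃ n : ℕ, 0 < n ∧ (g^[n] '' U₁ ∩ V₁).Nonempty ∧ (g^[n] '' U₂ ∩ V₂).Nonempty

/-- An autonomous map is totally transitive. -/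
def MapTotallyTransitive {Y : Type*} [TopologicalSpace Y] (g : Y → Y) : Prop :=
  ∀ k : ℕ, 0 < k → ∀ U V : Set Y, IsOpen U → U.Nonempty → IsOpen V → V.Nonempty →
    ∃ n : ℕ, 0 < n ∧ (g^[n * k] '' U ∩ V).Nonempty

/-- An autonomous map is syndetically transitive. -/
def MapSyndeticallyTransitive {Y : Type*} [TopologicalSpace Y] (g : Y → Y) : Prop :=
  ∀ U V : Set Y, IsOpen U → U.Nonempty → IsOpen V → V.Nonempty →
    SyndeticSet {n : ℕ | 0 < n ∧ (g^[n] '' U ∩ V).Nonempty}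

/-- An autonomous map is minimal. -/
def MapMinimal {Y : Type*} [TopologicalSpace Y] (g : Y → Y) : Prop :=
  ∀ x : Y, Dense (Set.range fun n : ℕ => g^[n] x)

end TopDefs

section MetricDefs

variable {X : Type*} [MetricSpace X]

/-- The compositions `(f_r^k)` converge collectively to `(f^k)` (w.r.t. the supremum metric). -/
def CollectivelyConverges (f : ℕ → X → X) (g : X → X) : Prop :=
  ∀ ε : ℝ, 0 < ε → ∃ r₀ : ℕ, ∀ r : ℕ, r₀ ≤ r → ∀ k : ℕ, 1 ≤ k → ∀ x : X,
    dist (nds f r k x) (g^[k] x) < ε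

/-- `N(U, δ)`: the times at which the NDS is `δ`-sensitive on `U`. -/
def SensSet (f : ℕ → X → X) (U : Set X) (δ : ℝ) : Set ℕ :=
  {n : ℕ | 0 < n ∧ ∃ x ∈ U, ∃ y ∈ U, δ < dist (nds f 1 n x) (nds f 1 n y)}

/-- The NDS `f_{1,∞}` is multi-sensitive. -/
def NDSMultiSensitive (f : ℕ → X → X) : Prop :=
  ∃ δ : ℝ, 0 < δ ∧ ∀ m : ℕ, 0 < m → ∀ U : Fin m → Set X,
    (∀ i, IsOpen (U i)) → (∀ i, (U i).Nonempty) → (⋂ i, SensSet f (U i) δ).Nonempty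

/-- The NDS `f_{1,∞}` is thickly sensitive. -/
def NDSThicklySensitive (f : ℕ → X → X) : Prop :=
  ∃ δ : ℝ, 0 < δ ∧ ∀ U : Set X, IsOpen U → U.Nonempty → ThickSet (SensSet f U δ)

/-- The NDS `f_{1,∞}` is syndetically sensitive. -/
def NDSSyndeticallySensitive (f : ℕ → X → X) : Prop :=
  ∃ δ : ℝ, 0 < δ ∧ ∀ U : Set X, IsOpen U → U.Nonempty → SyndeticSet (SensSet f U δ)

/-- The NDS `f_{1,∞}` is mildly mixing: its product with every transitive NDS on a compact
metric space is transitive. -/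
def NDSMildlyMixing (f : ℕ → X → X) : Prop :=
  ∀ (Y : Type*) [MetricSpace Y] [CompactSpace Y] (g : ℕ → Y → Y),
    (∀ n : ℕ, 1 ≤ n → Continuous (g n)) → NDSTransitive g →
    NDSTransitive (fun n (p : X × Y) => (f n p.1, g n p.2))

/-- The NDS `f_{1,∞}` is Li–Yorke chaotic. -/
def LiYorkeChaotic (f : ℕ → X → X) : Prop :=
  ∃ S : Set X, ¬S.Countable ∧ ∀ x ∈ S, ∀ y ∈ S, x ≠ y →
    Filter.liminf (fun n : ℕ => dist (nds f 1 n x) (nds f 1 n y)) Filter.atTop = 0 ∧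
    0 < Filter.limsup (fun n : ℕ => dist (nds f 1 n x) (nds f 1 n y)) Filter.atTop

end MetricDefs

lemma nds_add {X : Type*} (f : ℕ → X → X) (i m k : ℕ) (x : X) :
    nds f i (m + k) x = nds f (i + m) k (nds f i m x) := by
  induction k with
  | zero => rfl
  | succ k ih =>
    show nds f i (m + k + 1) x = (f (i + m + k) ∘ nds f (i + m) k) (nds f i m x)
    show f (i + (m + k)) (nds f i (m + k) x) = f (i + m + k) (nds f (i + m) k (nds f i m x))
    rw [ih, Nat.add_assoc]

lemma nds_cont {X : Type*} [TopologicalSpace X] (f : ℕ → X → X)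
    (hcont : ∀ n : ℕ, 1 ≤ n → Continuous (f n)) (m : ℕ) : Continuous (nds f 1 m) := by
  induction m with
  | zero => exact continuous_id
  | succ m ih => exact (hcont (1 + m) (Nat.le_add_right 1 m)).comp ih

lemma nds_surj {X : Type*} (f : ℕ → X → X)
    (hsurj : ∀ n : ℕ, 1 ≤ n → Function.Surjective (f n)) (m : ℕ) :
    Function.Surjective (nds f 1 m) := by
  induction m with
  | zero => exact Function.surjective_id
  | succ m ih => exact (hsurj (1 + m) (Nat.le_add_right 1 m)).comp ih

lemma nds_interior {X : Type*} [TopologicalSpace X] (f : ℕ → X → X)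
    (hfo : FeebleOpen f) (m : ℕ) (U : Set X) (hU : IsOpen U) (hUne : U.Nonempty) :
    (interior (nds f 1 m '' U)).Nonempty := by
  induction m with
  | zero =>
    simpa [nds, hU.interior_eq] using hUne
  | succ m ih =>
    have h1 : nds f 1 (m + 1) '' U = f (1 + m) '' (nds f 1 m '' U) := by
      show (f (1 + m) ∘ nds f 1 m) '' U = _
      rw [Set.image_comp]
    have h2 := hfo (1 + m) (Nat.le_add_right 1 m) (interior (nds f 1 m '' U))
      isOpen_interior ih
    refine h2.mono (interior_mono ?_)
    rw [h1]
    exact Set.image_mono interior_subset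

theorem syndeticallyTransitive_iff_limit_syndeticallyTransitive {X : Type*} [MetricSpace X]
    [CompactSpace X]
    (f : ℕ → X → X) (F : X → X)
    (hcont : ∀ n : ℕ, 1 ≤ n → Continuous (f n))
    (hfo : FeebleOpen f)
    (hsurj : ∀ n : ℕ, 1 ≤ n → Function.Surjective (f n))
    (hF : Continuous F)
    (hunif : TendstoUniformly (fun n x => f n x) F Filter.atTop)
    (hcoll : CollectivelyConverges f F) :
    NDSSyndeticallyTransitive f ↔ MapSyndeticallyTransitive F := by
  constructor
  · -- forward: NDS syndetically transitive ⇒ F syndetically transitive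
    intro hnds U V hU hUne hV hVne
    obtain ⟨v, hv⟩ := hVne
    obtain ⟨ε, hε, hball⟩ := Metric.isOpen_iff.1 hV v hv
    obtain ⟨r₀, hr₀⟩ := hcoll (ε / 2) (by positivity)
    set r := max r₀ 1 with hrdef
    have hr1 : 1 ≤ r := le_max_right _ _
    set m := r - 1 with hmdef
    have hrm : r = 1 + m := by omega
    -- W := preimage of U
    have hWopen : IsOpen ((nds f 1 m) ⁻¹' U) := hU.preimage (nds_cont f hcont m)
    have hWne : ((nds f 1 m) ⁻¹' U).Nonempty := by
      obtain ⟨u, hu⟩ := hUne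
      obtain ⟨w, hw⟩ := nds_surj f hsurj m u
      exact ⟨w, by simp [Set.mem_preimage, hw, hu]⟩
    obtain ⟨M, hM⟩ := hnds _ (Metric.ball v (ε / 2)) hWopen hWne Metric.isOpen_ball
      (Metric.nonempty_ball.2 (by positivity))
    refine ⟨M, fun i hi => ?_⟩
    obtain ⟨j, hjA, hj1, hj2⟩ := hM (i + m) (by omega)
    obtain ⟨hjpos, y, hyW, hyB⟩ := hjA
    obtain ⟨w, hwW, hwy⟩ := hyW
    set k := j - m with hkdef
    have hjk : j = m + k := by omega
    have hk1 : 1 ≤ k := by omega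
    have hx : nds f 1 j w = nds f r k (nds f 1 m w) := by
      rw [hjk, nds_add f 1 m k w, hrm]
    have hxU : nds f 1 m w ∈ U := hwW
    have hd1 : dist (nds f r k (nds f 1 m w)) (F^[k] (nds f 1 m w)) < ε / 2 :=
      hr₀ r (le_max_left _ _) k hk1 _
    have hyb : dist (nds f 1 j w) v < ε / 2 := by
      simpa [hwy] using hyB
    have hFk : F^[k] (nds f 1 m w) ∈ V := by
      apply hball
      have : dist (F^[k] (nds f 1 m w)) v ≤
          dist (F^[k] (nds f 1 m w)) (nds f r k (nds f 1 m w)) +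
            dist (nds f r k (nds f 1 m w)) v := dist_triangle _ _ _
      have h2 : dist (nds f r k (nds f 1 m w)) v < ε / 2 := by rw [← hx]; exact hyb
      rw [dist_comm] at hd1
      simp only [Metric.mem_ball]
      linarith
    refine ⟨k, ⟨by omega, F^[k] (nds f 1 m w), ⟨nds f 1 m w, hxU, rfl⟩, hFk⟩, by omega, by omega⟩
  · -- backward: F syndetically transitive ⇒ NDS syndetically transitive
    intro hFst U V hU hUne hV hVne
    obtain ⟨v, hv⟩ := hVne
    obtain ⟨ε, hε, hball⟩ := Metric.isOpen_iff.1 hV v hv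
    obtain ⟨r₀, hr₀⟩ := hcoll (ε / 2) (by positivity)
    set r := max r₀ 1 with hrdef
    have hr1 : 1 ≤ r := le_max_right _ _
    set m := r - 1 with hmdef
    have hrm : r = 1 + m := by omega
    have hU'ne : (interior (nds f 1 m '' U)).Nonempty := nds_interior f hfo m U hU hUne
    obtain ⟨M, hM⟩ := hFst (interior (nds f 1 m '' U)) (Metric.ball v (ε / 2))
      isOpen_interior hU'ne Metric.isOpen_ball (Metric.nonempty_ball.2 (by positivity))
    refine ⟨m + M, fun i hi => ?_⟩
    set i' := max 1 (i - m) with hi'def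
    obtain ⟨j, hjA, hj1, hj2⟩ := hM i' (le_max_left _ _)
    obtain ⟨hjpos, y, hyW, hyB⟩ := hjA
    obtain ⟨x, hxU', hxy⟩ := hyW
    obtain ⟨u, huU, hux⟩ := interior_subset hxU'
    set n := m + j with hndef
    have hnu : nds f 1 n u = nds f r j x := by
      rw [hndef, nds_add f 1 m j u, hrm, hux]
    have hd1 : dist (nds f r j x) (F^[j] x) < ε / 2 :=
      hr₀ r (le_max_left _ _) j hjpos _
    have hyb : dist (F^[j] x) v < ε / 2 := by
      simpa [hxy] using hyB
    have hnV : nds f 1 n u ∈ V := by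
      apply hball
      have : dist (nds f r j x) v ≤ dist (nds f r j x) (F^[j] x) + dist (F^[j] x) v :=
        dist_triangle _ _ _
      rw [hnu]
      simp only [Metric.mem_ball]
      linarith
    have hi'le : i' ≤ i := by omega
    refine ⟨n, ⟨by omega, nds f 1 n u, ⟨u, huU, rfl⟩, hnV⟩, by omega, by omega⟩
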